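/- Let d ≥ 1 and let K be a d-dimensional finite simplicial complex that is doubly Cohen–Macaulay over the field ℚ. Then K has a nowhere zero flow: there exists a d-chain z with values in ℤ such that ∂z = 0 and z(T) ≠ 0 for every face T of K of dimension d. -/
import Mathlib


namespace Paper2CM

variable {V : Type*} [Fintype V] [LinearOrder V]

/-- `sign(t,T) = (−1)^{|{s ∈ T : s < t}|}`. -/
def signOf (t : V) (T : Finset V) : ℤ := (-1) ^ (T.filter (fun s => s < t)).card

/-- The simplicial boundary operator on formal chains with coefficients in an
abelian group `A`: `∂c(S) = Σ_{t ∉ S} sign(t, S ∪ {t}) • c(S ∪ {t})`. -/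
def bdry {A : Type*} [AddCommGroup A] (c : Finset V → A) : Finset V → A :=
  fun S => ∑ t ∈ Sᶜ, signOf t (insert t S) • c (insert t S)

/-- A chain of degree `n - 1`, i.e. supported on sets of cardinality `n`. -/
def IsSimpChain {A : Type*} [AddCommGroup A] (n : ℕ) (c : Finset V → A) : Prop :=
  ∀ T, c T ≠ 0 → T.card = n

/-- `c'` is a subchain of `c`: each coefficient of `c'` agrees with that of `c` or is `0`. -/
def Subchain {A : Type*} [AddCommGroup A] (c' c : Finset V → A) : Prop :=
  ∀ T, c' T = c T ∨ c' T = 0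

/-- A minimal cycle supported on sets of cardinality `n` (so of dimension `n - 1`):
a nonzero cycle whose only subchains that are cycles are `0` and itself. -/
def IsMinimalCycle {A : Type*} [AddCommGroup A] (n : ℕ) (c : Finset V → A) : Prop :=
  c ≠ 0 ∧ IsSimpChain n c ∧ bdry c = 0 ∧
    ∀ c', Subchain c' c → bdry c' = 0 → c' = 0 ∨ c' = c

/-- The simplicial complex spanned by the support of a chain. -/
def spannedComplex {A : Type*} [AddCommGroup A] (c : Finset V → A) : Set (Finset V) :=
  {S | ∃ T, c T ≠ 0 ∧ S ⊆ T}

/-- A (finite) simplicial complex on vertex type `V`: a collection of finite subsets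
closed under taking subsets, containing the empty set. -/
def IsComplex (K : Set (Finset V)) : Prop :=
  ∅ ∈ K ∧ ∀ S ∈ K, ∀ T, T ⊆ S → T ∈ K

/-- The link of a face: `lk_L(T) = {S ∈ L : S ∩ T = ∅, S ∪ T ∈ L}`. -/
def cxLink (L : Set (Finset V)) (T : Finset V) : Set (Finset V) :=
  {S | S ∈ L ∧ Disjoint S T ∧ S ∪ T ∈ L}

/-- A pure complex: every face is contained in a face of maximal cardinality. -/
def IsPure (L : Set (Finset V)) : Prop :=
  ∀ S ∈ L, ∃ F ∈ L, S ⊆ F ∧ ∀ G ∈ L, G.card ≤ F.card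

/-- A chain of the complex `L` supported on faces of `L` of cardinality `n`. -/
def IsChainOn (k : Type*) [Field k] (L : Set (Finset V)) (n : ℕ) (c : Finset V → k) : Prop :=
  ∀ T, c T ≠ 0 → T ∈ L ∧ T.card = n

/-- Vanishing of the reduced homology `H̃_{n-1}(L; k)`: every cycle supported on
cardinality-`n` faces of `L` is the boundary of a chain on cardinality-`(n+1)` faces of `L`. -/
def HomologyVanishes (k : Type*) [Field k] (L : Set (Finset V)) (n : ℕ) : Prop :=
  ∀ c : Finset V → k, IsChainOn k L n c → bdry c = 0 →
    ∃ b : Finset V → k, IsChainOn k L (n + 1) b ∧ bdry b = c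

/-- Cohen–Macaulay over `k` via Reisner's criterion: `L` is pure and for every face
`T ∈ L` and every `i < dim lk_L(T)`, `H̃_i(lk_L(T); k) = 0` (here `i = n - 1`, and
`i < dim lk_L(T)` is expressed as: the link has a face of cardinality `> n`). -/
def IsCM (k : Type*) [Field k] (L : Set (Finset V)) : Prop :=
  IsPure L ∧ ∀ T ∈ L, ∀ n : ℕ, (∃ F ∈ cxLink L T, n < F.card) →
    HomologyVanishes k (cxLink L T) n

/-- Doubly Cohen–Macaulay over `k`: `K` is CM and for every vertex `v` of `K`,
`K − v` is CM of the same dimension as `K` (same maximal cardinality of a face). -/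
def Is2CM (k : Type*) [Field k] (K : Set (Finset V)) : Prop :=
  IsCM k K ∧ ∀ v : V, ({v} : Finset V) ∈ K →
    IsCM k {S | S ∈ K ∧ v ∉ S} ∧
    ∀ S ∈ K, ∃ F ∈ K, v ∉ F ∧ S.card ≤ F.card

set_option linter.unusedSectionVars false
set_option maxHeartbeats 1000000

lemma union_singleton' (S : Finset V) (v : V) : S ∪ {v} = insert v S := by
  rw [Finset.union_comm, ← Finset.insert_eq]

lemma signOf_insert_self (t : V) (T : Finset V) : signOf t (insert t T) = signOf t T := by
  unfold signOf
  rw [Finset.filter_insert]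
  rw [if_neg (lt_irrefl t)]

lemma signOf_insert (t : V) (T : Finset V) (h : t ∉ T) (v : V) (hne : t ≠ v) :
    signOf v (insert t T) = (if t < v then -1 else 1) * signOf v T := by
  unfold signOf
  rw [Finset.filter_insert]
  split_ifs with h1
  · rw [Finset.card_insert_of_notMem (fun hc => h (Finset.mem_of_mem_filter t hc))]
    rw [pow_succ]
    ring
  · ring

lemma signOf_mul_self (t : V) (T : Finset V) : signOf t T * signOf t T = 1 := by
  unfold signOf
  rw [← pow_add]
  exact Even.neg_one_pow ⟨_, rfl⟩

lemma sign_identity (v t : V) (R : Finset V) (hv : v ∈ R) (ht : t ∉ R) :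
    signOf t (insert t R) * signOf v (insert t R)
      = -(signOf v R * signOf t (insert t (R.erase v))) := by
  have htv : t ≠ v := fun h => ht (h ▸ hv)
  have h1 : signOf t (insert t R) = signOf t R := signOf_insert_self t R
  have h2 : signOf v (insert t R) = (if t < v then -1 else 1) * signOf v R :=
    signOf_insert t R ht v htv
  have h3 : signOf t (insert t (R.erase v)) = signOf t (R.erase v) :=
    signOf_insert_self t _
  have h4 : signOf t R = (if v < t then -1 else 1) * signOf t (R.erase v) := by
    conv_lhs => rw [← Finset.insert_erase hv]
    exact signOf_insert v (R.erase v) (Finset.notMem_erase v R) t htv.symm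
  rw [h1, h2, h3, h4]
  rcases lt_or_gt_of_ne htv with h | h
  · rw [if_pos h, if_neg (asymm h)]; ring
  · rw [if_neg (asymm h), if_pos h]; ring

/-- The cone over a cycle `y` avoiding `v` has boundary `y`. -/
lemma cone_bdry (v : V) (y : Finset V → ℚ) (hy0 : ∀ S, y S ≠ 0 → v ∉ S)
    (hcy : bdry y = 0) :
    bdry (fun S => if v ∈ S then (signOf v S : ℚ) * y (S.erase v) else 0) = y := by
  funext R
  show (∑ t ∈ Rᶜ, signOf t (insert t R) •
      (if v ∈ insert t R then (signOf v (insert t R) : ℚ) * y ((insert t R).erase v) else 0))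
      = y R
  by_cases hvR : v ∈ R
  · have hyR : y R = 0 := by
      by_contra h; exact hy0 R h hvR
    have hb : bdry y (R.erase v) = 0 := by rw [hcy]; rfl
    have hterm : ∀ t ∈ Rᶜ, signOf t (insert t R) •
        (if v ∈ insert t R then (signOf v (insert t R) : ℚ) * y ((insert t R).erase v) else 0)
        = (-(signOf v R : ℚ)) *
          (signOf t (insert t (R.erase v)) • y (insert t (R.erase v))) := by
      intro t htc
      have ht : t ∉ R := Finset.mem_compl.mp htc
      have htv : t ≠ v := fun h => ht (h ▸ hvR)
      rw [if_pos (Finset.mem_insert_of_mem hvR)]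
      rw [Finset.erase_insert_of_ne htv]
      have hid := sign_identity v t R hvR ht
      rw [zsmul_eq_mul, zsmul_eq_mul, ← mul_assoc, ← mul_assoc, ← Int.cast_mul, hid]
      push_cast
      ring
    rw [Finset.sum_congr rfl hterm, ← Finset.mul_sum]
    have hsplit : ∑ t ∈ (R.erase v)ᶜ,
        signOf t (insert t (R.erase v)) • y (insert t (R.erase v))
        = (signOf v (insert v (R.erase v)) • y (insert v (R.erase v)))
          + ∑ t ∈ Rᶜ, signOf t (insert t (R.erase v)) • y (insert t (R.erase v)) := by
      rw [Finset.compl_erase, Finset.sum_insert (by simp [hvR])]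
    have hvterm : signOf v (insert v (R.erase v)) • y (insert v (R.erase v)) = 0 := by
      rw [Finset.insert_erase hvR, hyR, smul_zero]
    have hrest : ∑ t ∈ Rᶜ, signOf t (insert t (R.erase v)) • y (insert t (R.erase v)) = 0 := by
      have hbe : ∑ t ∈ (R.erase v)ᶜ,
          signOf t (insert t (R.erase v)) • y (insert t (R.erase v)) = 0 := hb
      rw [hsplit, hvterm, zero_add] at hbe
      exact hbe
    rw [hrest, mul_zero, hyR]
  · rw [Finset.sum_eq_single_of_mem v (Finset.mem_compl.mpr hvR)]
    · rw [if_pos (Finset.mem_insert_self v R), Finset.erase_insert hvR, zsmul_eq_mul,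
        ← mul_assoc, ← Int.cast_mul, signOf_mul_self]
      simp
    · intro t _ htv
      rw [if_neg (by simp [hvR, htv.symm]), smul_zero]

lemma bdry_sub (c c' : Finset V → ℚ) :
    bdry (fun S => c S - c' S) = fun S => bdry c S - bdry c' S := by
  funext S
  simp [bdry, smul_sub, Finset.sum_sub_distrib]

lemma bdry_comb (a : ℚ) (c c' : Finset V → ℚ) :
    bdry (fun S => a * c S + c' S) = fun S => a * bdry c S + bdry c' S := by
  funext S
  unfold bdry
  rw [Finset.mul_sum, ← Finset.sum_add_distrib]
  refine Finset.sum_congr rfl fun t _ => ?_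
  rw [zsmul_eq_mul, zsmul_eq_mul, zsmul_eq_mul]
  ring

lemma bdry_mul (a : ℚ) (c : Finset V → ℚ) :
    bdry (fun S => a * c S) = fun S => a * bdry c S := by
  funext S
  unfold bdry
  rw [Finset.mul_sum]
  refine Finset.sum_congr rfl fun t _ => ?_
  rw [zsmul_eq_mul, zsmul_eq_mul]
  ring

lemma bdry_cast (c : Finset V → ℤ) (S : Finset V) :
    ((bdry c S : ℤ) : ℚ) = bdry (fun T => ((c T : ℤ) : ℚ)) S := by
  unfold bdry
  push_cast [zsmul_eq_mul]
  rfl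

lemma bdry_zero : bdry (fun _ : Finset V => (0 : ℚ)) = fun _ => (0 : ℚ) := by
  funext S; simp [bdry]

lemma cxLink_empty (L : Set (Finset V)) : cxLink L ∅ = L := by
  ext S; simp [cxLink]

lemma link_closed (L : Set (Finset V)) (hL : ∀ S ∈ L, ∀ T, T ⊆ S → T ∈ L) (T : Finset V) :
    ∀ S ∈ cxLink L T, ∀ S', S' ⊆ S → S' ∈ cxLink L T := by
  rintro S ⟨hS, hdisj, hun⟩ S' hsub
  exact ⟨hL S hS S' hsub, hdisj.mono_left hsub,
    hL _ hun _ (Finset.union_subset_union_left hsub)⟩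

lemma del_closed (L : Set (Finset V)) (hL : ∀ S ∈ L, ∀ T, T ⊆ S → T ∈ L) (v : V) :
    ∀ S ∈ {S | S ∈ L ∧ v ∉ S}, ∀ S', S' ⊆ S → S' ∈ {S | S ∈ L ∧ v ∉ S} := by
  rintro S ⟨hS, hv⟩ S' hsub
  exact ⟨hL S hS S' hsub, fun h => hv (hsub h)⟩

lemma link_link (L : Set (Finset V)) (hL : ∀ S ∈ L, ∀ T, T ⊆ S → T ∈ L)
    (v : V) (T' : Finset V) (hT' : T' ∈ cxLink L {v}) :
    cxLink (cxLink L {v}) T' = cxLink L (T' ∪ {v}) := by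
  obtain ⟨hT'L, hT'd, hT'u⟩ := hT'
  ext S
  constructor
  · rintro ⟨⟨hSL, hSd, hSu⟩, hdisj, ⟨hSTL, hSTd, hSTu⟩⟩
    refine ⟨hSL, ?_, ?_⟩
    · rw [Finset.disjoint_union_right]
      exact ⟨hdisj, hSd⟩
    · rwa [← Finset.union_assoc]
  · rintro ⟨hSL, hdisj, hun⟩
    rw [Finset.disjoint_union_right] at hdisj
    have h1 : S ∪ {v} ∈ L := hL _ hun _ (by
      intro x hx
      rw [Finset.mem_union] at hx ⊢
      rcases hx with h | h
      · exact Or.inl h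
      · exact Or.inr (Finset.mem_union_right _ h))
    have h2 : S ∪ T' ∈ L := hL _ hun _ (by
      intro x hx
      rw [Finset.mem_union] at hx ⊢
      rcases hx with h | h
      · exact Or.inl h
      · exact Or.inr (Finset.mem_union_left _ h))
    have h3 : (S ∪ T') ∪ {v} ∈ L := by
      rwa [Finset.union_assoc]
    refine ⟨⟨hSL, hdisj.2, h1⟩, hdisj.1, ⟨h2, ?_, h3⟩⟩
    rw [Finset.disjoint_union_left]
    exact ⟨hdisj.2, hT'd⟩

lemma del_link (L : Set (Finset V)) (v u : V) (huv : u ≠ v) :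
    {S | S ∈ cxLink L {v} ∧ u ∉ S} = cxLink {S | S ∈ L ∧ u ∉ S} {v} := by
  ext S
  constructor
  · rintro ⟨⟨hS, hd, hu⟩, huS⟩
    refine ⟨⟨hS, huS⟩, hd, hu, ?_⟩
    rw [Finset.mem_union, Finset.mem_singleton]
    rintro (h | h)
    · exact huS h
    · exact huv h
  · rintro ⟨⟨hS, huS⟩, hd, hu, _⟩
    exact ⟨⟨hS, hd, hu⟩, huS⟩

/-- Key induction: in a 2-CM-ish complex of dimension `m`, every facet supports a
top-dimensional rational cycle which is nonzero on that facet. -/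
lemma key : ∀ (m : ℕ) (L : Set (Finset V)),
    (∀ S ∈ L, ∀ T, T ⊆ S → T ∈ L) →
    (∀ S ∈ L, S.card ≤ m + 1) →
    (∀ T ∈ L, ∀ n : ℕ, (∃ F ∈ cxLink L T, n < F.card) →
        HomologyVanishes ℚ (cxLink L T) n) →
    (∀ v : V, ({v} : Finset V) ∈ L → ∀ T ∈ {S | S ∈ L ∧ v ∉ S}, ∀ n : ℕ,
        (∃ F ∈ cxLink {S | S ∈ L ∧ v ∉ S} T, n < F.card) →
        HomologyVanishes ℚ (cxLink {S | S ∈ L ∧ v ∉ S} T) n) →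
    (∀ v : V, ({v} : Finset V) ∈ L → ∀ S ∈ L, v ∉ S →
        ∃ F ∈ L, v ∉ F ∧ S ⊆ F ∧ F.card = m + 1) →
    (∀ S ∈ L, ∃ F ∈ L, S ⊆ F ∧ F.card = m + 1) →
    ∀ T ∈ L, T.card = m + 1 →
    ∃ z : Finset V → ℚ, IsChainOn ℚ L (m + 1) z ∧ bdry z = 0 ∧ z T ≠ 0 := by
  intro m
  induction m with
  | zero =>
    intro L hcl hcard hq4 hq5 hq7 hq8 T hT hTc
    obtain ⟨t, rfl⟩ := Finset.card_eq_one.mp hTc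
    have hempty : (∅ : Finset V) ∈ L := hcl _ hT ∅ (Finset.empty_subset _)
    obtain ⟨F, hF, htF, -, hFc⟩ := hq7 t hT ∅ hempty (Finset.notMem_empty t)
    obtain ⟨u, rfl⟩ := Finset.card_eq_one.mp hFc
    have hut : t ≠ u := by
      intro h
      exact htF (h ▸ Finset.mem_singleton_self u)
    refine ⟨fun S => if S = {t} then 1 else if S = {u} then -1 else 0, ?_, ?_, ?_⟩
    · intro S hS
      by_cases h1 : S = {t}
      · subst h1; exact ⟨hT, Finset.card_singleton t⟩
      · by_cases h2 : S = {u}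
        · subst h2; exact ⟨hF, Finset.card_singleton u⟩
        · simp only [if_neg h1, if_neg h2] at hS
          exact absurd rfl hS
    · funext S
      show (∑ s ∈ Sᶜ, signOf s (insert s S) •
          (if insert s S = {t} then (1:ℚ) else if insert s S = {u} then -1 else 0)) = 0
      by_cases hS : S = (∅ : Finset V)
      · subst hS
        have hsign : ∀ s : V, signOf s (insert s (∅ : Finset V)) = 1 := by
          intro s
          unfold signOf
          rw [Finset.insert_empty, Finset.filter_singleton, if_neg (lt_irrefl s),
            Finset.card_empty, pow_zero]
        have hterm : ∀ s : V, signOf s (insert s (∅ : Finset V)) •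
            (if insert s (∅ : Finset V) = {t} then (1:ℚ)
              else if insert s (∅ : Finset V) = {u} then -1 else 0)
            = (if s = t then (1:ℚ) else 0) + (if s = u then -1 else 0) := by
          intro s
          rw [hsign s, one_smul, Finset.insert_empty]
          by_cases h1 : s = t
          · subst h1
            rw [if_pos rfl, if_pos rfl, if_neg (by simpa using hut), add_zero]
          · rw [if_neg (by simpa using h1), if_neg h1, zero_add]
            by_cases h2 : s = u
            · subst h2; rw [if_pos rfl, if_pos rfl]
            · rw [if_neg (by simpa using h2), if_neg h2]
        rw [Finset.sum_congr rfl (fun s _ => hterm s), Finset.sum_add_distrib]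
        rw [Finset.compl_empty]
        rw [Finset.sum_ite_eq' Finset.univ t (fun _ => (1:ℚ)),
          Finset.sum_ite_eq' Finset.univ u (fun _ => (-1:ℚ))]
        simp
      · refine Finset.sum_eq_zero fun s hs => ?_
        have hcard2 : (insert s S).card ≠ 1 := by
          rw [Finset.card_insert_of_notMem (Finset.mem_compl.mp hs)]
          have : S.Nonempty := Finset.nonempty_iff_ne_empty.mpr hS
          have := Finset.card_pos.mpr this
          omega
        rw [if_neg (fun h => hcard2 (by rw [h]; exact Finset.card_singleton t)),
          if_neg (fun h => hcard2 (by rw [h]; exact Finset.card_singleton u)), smul_zero]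
    · simp
  | succ m ih =>
    intro L hcl hcard hq4 hq5 hq7 hq8 T hT hTc
    have hTne : T.Nonempty := Finset.card_pos.mp (by omega)
    obtain ⟨v, hv⟩ := hTne
    have hvL : ({v} : Finset V) ∈ L := hcl T hT {v} (Finset.singleton_subset_iff.mpr hv)
    -- the link of v
    have hT'Λ : T.erase v ∈ cxLink L {v} := by
      refine ⟨hcl T hT _ (Finset.erase_subset v T), ?_, ?_⟩
      · rw [Finset.disjoint_singleton_right]
        exact Finset.notMem_erase v T
      · rw [union_singleton', Finset.insert_erase hv]
        exact hT
    have hT'c : (T.erase v).card = m + 1 := by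
      rw [Finset.card_erase_of_mem hv, hTc]; omega
    have hclΛ := link_closed L hcl {v}
    have hcardΛ : ∀ S ∈ cxLink L {v}, S.card ≤ m + 1 := by
      rintro S ⟨hS, hd, hu⟩
      have h1 := hcard _ hu
      rw [union_singleton', Finset.card_insert_of_notMem
        (Finset.disjoint_singleton_right.mp hd)] at h1
      omega
    have hq4Λ : ∀ T'' ∈ cxLink L {v}, ∀ n : ℕ,
        (∃ F ∈ cxLink (cxLink L {v}) T'', n < F.card) →
        HomologyVanishes ℚ (cxLink (cxLink L {v}) T'') n := by
      intro T'' hT'' n hex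
      rw [link_link L hcl v T'' hT''] at hex ⊢
      exact hq4 (T'' ∪ {v}) hT''.2.2 n hex
    have hq5Λ : ∀ u : V, ({u} : Finset V) ∈ cxLink L {v} →
        ∀ T'' ∈ {S | S ∈ cxLink L {v} ∧ u ∉ S}, ∀ n : ℕ,
        (∃ F ∈ cxLink {S | S ∈ cxLink L {v} ∧ u ∉ S} T'', n < F.card) →
        HomologyVanishes ℚ (cxLink {S | S ∈ cxLink L {v} ∧ u ∉ S} T'') n := by
      intro u hu T'' hT'' n hex
      have huv : u ≠ v := by
        have := hu.2.1
        rw [Finset.disjoint_singleton_right, Finset.mem_singleton] at this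
        exact fun h => this h.symm
      rw [del_link L v u huv] at hT'' hex ⊢
      rw [link_link {S | S ∈ L ∧ u ∉ S} (del_closed L hcl u) v T'' hT''] at hex ⊢
      exact hq5 u hu.1 (T'' ∪ {v}) hT''.2.2 n hex
    have hq7Λ : ∀ u : V, ({u} : Finset V) ∈ cxLink L {v} →
        ∀ S ∈ cxLink L {v}, u ∉ S →
        ∃ F ∈ cxLink L {v}, u ∉ F ∧ S ⊆ F ∧ F.card = m + 1 := by
      intro u hu S hS huS
      have huv : u ≠ v := by
        have := hu.2.1
        rw [Finset.disjoint_singleton_right, Finset.mem_singleton] at this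
        exact fun h => this h.symm
      have huSv : u ∉ S ∪ {v} := by
        rw [Finset.mem_union, Finset.mem_singleton]
        rintro (h | h)
        · exact huS h
        · exact huv h
      obtain ⟨F, hFL, huF, hSF, hFc⟩ := hq7 u hu.1 (S ∪ {v}) hS.2.2 huSv
      have hvF : v ∈ F := hSF (Finset.mem_union_right _ (Finset.mem_singleton_self v))
      refine ⟨F.erase v, ⟨hcl F hFL _ (Finset.erase_subset v F), ?_, ?_⟩, ?_, ?_, ?_⟩
      · rw [Finset.disjoint_singleton_right]
        exact Finset.notMem_erase v F
      · rw [union_singleton', Finset.insert_erase hvF]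
        exact hFL
      · exact fun h => huF (Finset.mem_of_mem_erase h)
      · refine Finset.subset_erase.mpr ⟨(Finset.subset_union_left).trans hSF, ?_⟩
        exact Finset.disjoint_singleton_right.mp hS.2.1
      · rw [Finset.card_erase_of_mem hvF, hFc]; omega
    have hq8Λ : ∀ S ∈ cxLink L {v}, ∃ F ∈ cxLink L {v}, S ⊆ F ∧ F.card = m + 1 := by
      intro S hS
      obtain ⟨F, hFL, hSF, hFc⟩ := hq8 (S ∪ {v}) hS.2.2
      have hvF : v ∈ F := hSF (Finset.mem_union_right _ (Finset.mem_singleton_self v))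
      refine ⟨F.erase v, ⟨hcl F hFL _ (Finset.erase_subset v F), ?_, ?_⟩, ?_, ?_⟩
      · rw [Finset.disjoint_singleton_right]
        exact Finset.notMem_erase v F
      · rw [union_singleton', Finset.insert_erase hvF]
        exact hFL
      · refine Finset.subset_erase.mpr ⟨(Finset.subset_union_left).trans hSF, ?_⟩
        exact Finset.disjoint_singleton_right.mp hS.2.1
      · rw [Finset.card_erase_of_mem hvF, hFc]; omega
    obtain ⟨y, hychain, hycyc, hyT⟩ :=
      ih (cxLink L {v}) hclΛ hcardΛ hq4Λ hq5Λ hq7Λ hq8Λ (T.erase v) hT'Λ hT'c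
    -- homology of the deletion vanishes in degree m
    have hHV : HomologyVanishes ℚ {S | S ∈ L ∧ v ∉ S} (m + 1) := by
      have hempty : (∅ : Finset V) ∈ {S | S ∈ L ∧ v ∉ S} :=
        ⟨hcl T hT ∅ (Finset.empty_subset _), Finset.notMem_empty v⟩
      obtain ⟨F, hF, hvF, -, hFc⟩ :=
        hq7 v hvL ∅ (hcl T hT ∅ (Finset.empty_subset _)) (Finset.notMem_empty v)
      have h := hq5 v hvL ∅ hempty (m + 1) ⟨F, by
        rw [cxLink_empty]
        exact ⟨hF, hvF⟩, by omega⟩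
      rwa [cxLink_empty] at h
    have hydel : IsChainOn ℚ {S | S ∈ L ∧ v ∉ S} (m + 1) y := by
      intro S hS
      obtain ⟨⟨h1, h2, h3⟩, h4⟩ := hychain S hS
      exact ⟨⟨h1, Finset.disjoint_singleton_right.mp h2⟩, h4⟩
    obtain ⟨b, hbchain, hbbdry⟩ := hHV y hydel hycyc
    have hz₁ : bdry (fun S => if v ∈ S then (signOf v S : ℚ) * y (S.erase v) else 0) = y :=
      cone_bdry v y
        (fun S h => Finset.disjoint_singleton_right.mp (hychain S h).1.2.1) hycyc
    refine ⟨fun S => (if v ∈ S then (signOf v S : ℚ) * y (S.erase v) else 0) - b S,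
      ?_, ?_, ?_⟩
    · intro S hS
      by_cases h1 : (if v ∈ S then (signOf v S : ℚ) * y (S.erase v) else 0) = 0
      · have hbS : b S ≠ 0 := by
          intro h
          exact hS (by simp only [h1, h, sub_zero])
        obtain ⟨⟨hSL, -⟩, hSc⟩ := hbchain S hbS
        exact ⟨hSL, hSc⟩
      · have hvS : v ∈ S := by
          by_contra h
          exact h1 (if_neg h)
        have hy' : y (S.erase v) ≠ 0 := by
          intro h
          exact h1 (by rw [if_pos hvS, h, mul_zero])
        obtain ⟨⟨-, -, h3⟩, h4⟩ := hychain _ hy'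
        rw [union_singleton', Finset.insert_erase hvS] at h3
        refine ⟨h3, ?_⟩
        rw [← Finset.insert_erase hvS,
          Finset.card_insert_of_notMem (Finset.notMem_erase v S), h4]
    · have hbs := bdry_sub (fun S => if v ∈ S then (signOf v S : ℚ) * y (S.erase v) else 0) b
      rw [hbs, hz₁, hbbdry]
      funext S
      exact sub_self (y S)
    · have hbT : b T = 0 := by
        by_contra h
        exact (hbchain T h).1.2 hv
      simp only [hbT, sub_zero, if_pos hv]
      refine mul_ne_zero ?_ hyT
      rw [Int.cast_ne_zero]
      exact pow_ne_zero _ (by norm_num)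

/-- Combining cycles over an infinite field: if each facet in `A` has a cycle not
vanishing on it, there is a single cycle vanishing on no facet in `A`. -/
lemma combine (K : Set (Finset V)) (n : ℕ) (A : Finset (Finset V))
    (h : ∀ T ∈ A, ∃ z : Finset V → ℚ, IsChainOn ℚ K n z ∧ bdry z = 0 ∧ z T ≠ 0) :
    ∃ z : Finset V → ℚ, IsChainOn ℚ K n z ∧ bdry z = 0 ∧ ∀ T ∈ A, z T ≠ 0 := by
  classical
  induction A using Finset.induction_on with
  | empty =>
    exact ⟨fun _ => 0, fun T hT => absurd rfl hT, bdry_zero,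
      fun T hT => absurd hT (Finset.notMem_empty T)⟩
  | @insert T A hTA ihA =>
    obtain ⟨z, hzc, hzb, hznz⟩ := ihA fun S hS => h S (Finset.mem_insert_of_mem hS)
    obtain ⟨w, hwc, hwb, hwT⟩ := h T (Finset.mem_insert_self T A)
    obtain ⟨a, ha⟩ := Infinite.exists_notMem_finset
      ((insert T A).image fun S => -(z S) / (w S))
    refine ⟨fun S => a * w S + z S, ?_, ?_, ?_⟩
    · intro S hS
      by_cases h1 : w S = 0
      · exact hzc S (by
          intro h0
          exact hS (by simp only [h1, h0, mul_zero, add_zero]))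
      · exact hwc S h1
    · rw [bdry_comb, hwb, hzb]
      funext S
      simp
    · intro S hS h0
      by_cases h1 : w S = 0
      · have hSA : S ∈ A := by
          rcases Finset.mem_insert.mp hS with rfl | h'
          · exact absurd h1 hwT
          · exact h'
        simp only [h1, mul_zero, zero_add] at h0
        exact hznz S hSA h0
      · apply ha
        refine Finset.mem_image.mpr ⟨S, hS, ?_⟩
        have h0' : a * w S + z S = 0 := h0
        rw [div_eq_iff h1]
        linarith

/-- Every `d`-dimensional doubly Cohen–Macaulay complex over `ℚ`
(`d ≥ 1`) has a nowhere zero flow: an integer-valued `d`-chain `z` supported on the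
`d`-faces of `K`, with `∂z = 0`, which is nonzero on every `d`-face of `K`. -/
theorem two_CM_has_nowhere_zero_flow
    {V : Type*} [Fintype V] [LinearOrder V]
    (d : ℕ) (hd : 1 ≤ d) (K : Set (Finset V))
    (hK : IsComplex K)
    (hdim : (∀ S ∈ K, S.card ≤ d + 1) ∧ ∃ S ∈ K, S.card = d + 1)
    (h2cm : Is2CM ℚ K) :
    ∃ z : Finset V → ℤ,
      (∀ T, z T ≠ 0 → T ∈ K ∧ T.card = d + 1) ∧
      bdry z = 0 ∧
      ∀ T ∈ K, T.card = d + 1 → z T ≠ 0 := by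
  classical
  obtain ⟨S₀, hS₀, hS₀c⟩ := hdim.2
  have hcl := hK.2
  have hq8 : ∀ S ∈ K, ∃ F ∈ K, S ⊆ F ∧ F.card = d + 1 := by
    intro S hS
    obtain ⟨F, hF, hSF, hmax⟩ := h2cm.1.1 S hS
    exact ⟨F, hF, hSF, le_antisymm (hdim.1 F hF) (hS₀c ▸ hmax S₀ hS₀)⟩
  have hq7 : ∀ v : V, ({v} : Finset V) ∈ K → ∀ S ∈ K, v ∉ S →
      ∃ F ∈ K, v ∉ F ∧ S ⊆ F ∧ F.card = d + 1 := by
    intro v hv S hS hvS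
    obtain ⟨hCMdel, hfull⟩ := h2cm.2 v hv
    obtain ⟨F, hF, hSF, hmax⟩ := hCMdel.1 S ⟨hS, hvS⟩
    obtain ⟨F₀, hF₀, hvF₀, hF₀c⟩ := hfull S₀ hS₀
    have hF₀card : F₀.card = d + 1 :=
      le_antisymm (hdim.1 F₀ hF₀) (hS₀c ▸ hF₀c)
    have hFc : F.card = d + 1 :=
      le_antisymm (hdim.1 F hF.1) (hF₀card ▸ hmax F₀ ⟨hF₀, hvF₀⟩)
    exact ⟨F, hF.1, hF.2, hSF, hFc⟩
  have hkey : ∀ T ∈ K, T.card = d + 1 →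
      ∃ z : Finset V → ℚ, IsChainOn ℚ K (d + 1) z ∧ bdry z = 0 ∧ z T ≠ 0 :=
    fun T hT hTc =>
      key d K hcl hdim.1 h2cm.1.2 (fun v hv => (h2cm.2 v hv).1.2) hq7 hq8 T hT hTc
  obtain ⟨z, hzc, hzb, hznz⟩ := combine K (d + 1)
    (Finset.univ.filter fun T => T ∈ K ∧ T.card = d + 1)
    (fun T hT => hkey T (Finset.mem_filter.mp hT).2.1 (Finset.mem_filter.mp hT).2.2)
  -- clear denominators
  obtain ⟨N, hN⟩ : ∃ N : ℤ, N = ∏ R : Finset V, ((z R).den : ℤ) := ⟨_, rfl⟩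
  have hnum : ∀ q : ℚ, (q.den : ℚ) * q = (q.num : ℚ) := by
    intro q
    have hden : ((q.den : ℚ)) ≠ 0 := by exact_mod_cast q.den_ne_zero
    rw [mul_comm]
    exact (eq_div_iff hden).mp (Rat.num_div_den q).symm
  have hint : ∀ S : Finset V, ∃ k : ℤ, (k : ℚ) = (N : ℚ) * z S := by
    intro S
    have hdvd : ((z S).den : ℤ) ∣ N := by
      rw [hN]
      exact Finset.dvd_prod_of_mem (fun R => ((z R).den : ℤ)) (Finset.mem_univ S)
    obtain ⟨c, hc⟩ := hdvd
    refine ⟨c * (z S).num, ?_⟩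
    rw [hc]
    push_cast
    rw [mul_comm (((z S).den : ℚ)) ((c : ℚ)), mul_assoc, hnum (z S)]
  choose zz hzz using hint
  have hNne : ((N : ℤ) : ℚ) ≠ 0 := by
    rw [Int.cast_ne_zero, hN]
    refine Finset.prod_ne_zero_iff.mpr fun R _ => ?_
    exact_mod_cast (z R).den_ne_zero
  refine ⟨zz, ?_, ?_, ?_⟩
  · intro T hT
    have h1 : (zz T : ℚ) ≠ 0 := Int.cast_ne_zero.mpr hT
    rw [hzz T] at h1
    exact hzc T fun h => h1 (by rw [h, mul_zero])
  · funext S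
    have h1 : ((bdry zz S : ℤ) : ℚ) = 0 := by
      rw [bdry_cast]
      rw [show (fun T => ((zz T : ℤ) : ℚ)) = fun T => (N : ℚ) * z T from funext hzz]
      rw [bdry_mul, hzb]
      simp
    exact_mod_cast h1
  · intro T hT hTc
    have hzT := hznz T (Finset.mem_filter.mpr ⟨Finset.mem_univ T, hT, hTc⟩)
    intro h0
    have hzero : ((0 : ℤ) : ℚ) = (N : ℚ) * z T := by
      rw [← h0]; exact hzz T
    rcases mul_eq_zero.mp hzero.symm with h | h
    · exact hNne h
    · exact hzT h

end Paper2CM
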